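/- Expected regret bound with noisy sign estimates: under the setup of Theorem 1 but where at each round m the algorithm uses a random sign estimate ŝ_m ∈ {-1,0,1} satisfying H_m·E[ŝ_m | k_1,...,k_m] = sign(τ_m'(k_m)) for some 1 <= H_m <= H, the updates k_{m+1} = P(k_m - δ_m ŝ_m) with δ_m = B/sqrt(2m) yield expected regret E[Σ_{m=1}^M (τ_m(k_m) - τ_m(k*))] <= G·H·B·sqrt(2M). -/

import Mathlib

open MeasureTheory


/-- Gradient inequality for convex functions. -/
lemma grad_ineq_aux {s : Set ℝ} {f : ℝ → ℝ} {f'x x y : ℝ} (hc : ConvexOn ℝ s f)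
    (hx : x ∈ s) (hy : y ∈ s) (hd : HasDerivAt f f'x x) :
    f x + f'x * (y - x) ≤ f y := by
  rcases lt_trichotomy x y with h | h | h
  · have h1 := hc.le_slope_of_hasDerivAt hx hy h hd
    rw [slope_def_field, le_div_iff₀ (sub_pos.2 h)] at h1
    linarith
  · subst h; simp
  · have h1 := hc.slope_le_of_hasDerivAt hy hx h hd
    rw [slope_def_field, div_le_iff₀ (sub_pos.2 h)] at h1
    linarith

/-- Pointwise per-round key inequality. -/
lemma key_ptwise {kmin kmax kstar G x : ℝ} {f f' : ℝ → ℝ}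
    (hconv : ConvexOn ℝ (Set.Icc kmin kmax) f)
    (hderiv : ∀ z ∈ Set.Icc kmin kmax, HasDerivAt f (f' z) z)
    (hmin : ∀ z ∈ Set.Icc kmin kmax, f kstar ≤ f z)
    (hbound : |f' x| ≤ G)
    (hks : kstar ∈ Set.Icc kmin kmax) (hx : x ∈ Set.Icc kmin kmax) :
    f x - f kstar ≤ G * (Real.sign (f' x) * (x - kstar)) ∧
      0 ≤ Real.sign (f' x) * (x - kstar) := by
  have grad : f x + f' x * (kstar - x) ≤ f kstar :=
    grad_ineq_aux hconv hx hks (hderiv x hx)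
  have hfk : f kstar ≤ f x := hmin x hx
  rw [abs_le] at hbound
  rcases lt_trichotomy (f' x) 0 with h | h | h
  · rw [Real.sign_of_neg h]
    have hxk : 0 ≤ kstar - x := by nlinarith
    constructor <;> nlinarith
  · rw [h, Real.sign_zero]
    rw [h] at grad
    constructor
    · simp only [zero_mul, mul_zero]; linarith
    · simp
  · rw [Real.sign_of_pos h]
    have hxk : kstar - x ≤ 0 := by nlinarith
    constructor <;> nlinarith

/-- Projection is non-expansive (squared form). -/
lemma proj_sq_aux {kmin kmax kstar y : ℝ} (h1 : kmin ≤ kstar) (h2 : kstar ≤ kmax) :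
    (max kmin (min kmax y) - kstar)^2 ≤ (y - kstar)^2 := by
  rcases le_total y kmin with h | h
  · rw [min_eq_right (h.trans (h1.trans h2)), max_eq_left h]
    nlinarith
  · rw [max_eq_right (le_min (h1.trans h2) h)]
    rcases le_total y kmax with h' | h'
    · rw [min_eq_right h']
    · rw [min_eq_left h']; nlinarith

/-- Sum of inverse square roots. -/
lemma sum_inv_sqrt_aux : ∀ M : ℕ, ∑ m ∈ Finset.Icc 1 M, (Real.sqrt (2*m))⁻¹ ≤ Real.sqrt (2*M) := by
  intro M
  induction M with
  | zero => simp
  | succ n ih =>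
    rw [Finset.sum_Icc_succ_top (by omega : 1 ≤ n + 1)]
    set x := Real.sqrt (2*(n:ℝ)) with hxdef
    set y := Real.sqrt (2*((n:ℝ)+1)) with hydef
    have hx2 : x^2 = 2*n := Real.sq_sqrt (by positivity)
    have hy2 : y^2 = 2*n+2 := by
      rw [hydef, Real.sq_sqrt (by positivity)]; ring
    have hy0 : 0 < y := Real.sqrt_pos.2 (by positivity)
    have hx0 : 0 ≤ x := Real.sqrt_nonneg _
    have key : x*y + 1 ≤ y^2 := by nlinarith [sq_nonneg (x - y)]
    have : (x + y⁻¹) * y ≤ y * y := by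
      have hyy : y⁻¹ * y = 1 := inv_mul_cancel₀ hy0.ne'
      nlinarith
    have hineq : x + y⁻¹ ≤ y := le_of_mul_le_mul_right this hy0
    push_cast
    calc ∑ m ∈ Finset.Icc 1 n, (Real.sqrt (2*(m:ℝ)))⁻¹ + (Real.sqrt (2*((n:ℝ)+1)))⁻¹
        ≤ x + y⁻¹ := by linarith
      _ ≤ y := hineq


lemma regret_sum_ptwise (kmin kmax kstar B : ℝ) (hK : kmin ≤ kmax) (hB : B = kmax - kmin)
    (hks : kstar ∈ Set.Icc kmin kmax) (M : ℕ) (hM : 1 ≤ M) (a s δ : ℕ → ℝ)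
    (hδ : ∀ m, δ m = B / Real.sqrt (2*m))
    (ha : ∀ m, a m ∈ Set.Icc kmin kmax)
    (hs : ∀ m, s m ∈ ({-1,0,1} : Set ℝ))
    (hup : ∀ m, 1 ≤ m → m ≤ M → a (m+1) = max kmin (min kmax (a m - δ m * s m))) :
    ∑ m ∈ Finset.Icc 1 M, (a m - kstar) * s m ≤ B * Real.sqrt (2*M) := by
  have hB0 : 0 ≤ B := by rw [hB]; linarith
  rcases eq_or_lt_of_le hB0 with hBz | hBpos
  · -- degenerate case B = 0
    have hkk : kmax = kmin := by rw [hB] at hBz; linarith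
    have hzero : ∀ m, a m - kstar = 0 := by
      intro m
      have h1 := ha m; have h2 := hks
      rw [hkk] at h1 h2
      have ha1 : a m = kmin := le_antisymm h1.2 h1.1
      have ha2 : kstar = kmin := le_antisymm h2.2 h2.1
      rw [ha1, ha2, sub_self]
    rw [Finset.sum_eq_zero (fun m _ => by rw [hzero m, zero_mul])]
    positivity
  · set c : ℕ → ℝ := fun n => Real.sqrt (2*n) / (2*B) with hc
    have hc_nonneg : ∀ n : ℕ, 0 ≤ c n := fun n => by positivity
    have hc_mono : ∀ n : ℕ, c n ≤ c (n+1) := by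
      intro n
      simp only [hc]
      gcongr
      linarith
    have hs2 : ∀ m, (s m)^2 ≤ 1 := by
      intro m
      have := hs m
      simp only [Set.mem_insert_iff, Set.mem_singleton_iff] at this
      rcases this with h | h | h <;> rw [h] <;> norm_num
    have hD2 : ∀ m, (a m - kstar)^2 ≤ B^2 := by
      intro m
      have h1 := ha m
      have h2 := hks
      simp only [Set.mem_Icc] at h1 h2
      nlinarith [h1.1, h1.2, h2.1, h2.2]
    -- per-step inequality
    have hstep : ∀ m, 1 ≤ m → m ≤ M →
        (a m - kstar) * s m ≤ c m * ((a m - kstar)^2 - (a (m+1) - kstar)^2) + δ m / 2 := by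
      intro m h1m hmM
      have hsq : 0 < Real.sqrt (2*(m:ℝ)) := Real.sqrt_pos.2 (by
        have : (1:ℝ) ≤ (m:ℝ) := by exact_mod_cast h1m
        linarith)
      have hdpos : 0 < δ m := by rw [hδ m]; positivity
      have hcd : 2 * δ m * c m = 1 := by
        rw [hδ m]; simp only [hc]
        field_simp
      have hc0 : 0 < c m := by simp only [hc]; positivity
      have hproj : (a (m+1) - kstar)^2 ≤ (a m - kstar - δ m * s m)^2 := by
        rw [hup m h1m hmM]
        have := proj_sq_aux (y := a m - δ m * s m) hks.1 hks.2
        calc (max kmin (min kmax (a m - δ m * s m)) - kstar)^2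
            ≤ (a m - δ m * s m - kstar)^2 := this
          _ = (a m - kstar - δ m * s m)^2 := by ring
      have hds : (δ m)^2 * (s m)^2 ≤ (δ m)^2 * 1 :=
        mul_le_mul_of_nonneg_left (hs2 m) (sq_nonneg _)
      have h1 : 2 * δ m * ((a m - kstar) * s m)
          ≤ (a m - kstar)^2 - (a (m+1) - kstar)^2 + (δ m)^2 := by nlinarith
      calc (a m - kstar) * s m
          = (2 * δ m * ((a m - kstar) * s m)) * c m := by
            rw [mul_comm (2 * δ m) _, mul_assoc, hcd, mul_one]
        _ ≤ ((a m - kstar)^2 - (a (m+1) - kstar)^2 + (δ m)^2) * c m :=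
            mul_le_mul_of_nonneg_right h1 hc0.le
        _ = c m * ((a m - kstar)^2 - (a (m+1) - kstar)^2) + (δ m)^2 * c m := by ring
        _ = c m * ((a m - kstar)^2 - (a (m+1) - kstar)^2) + δ m / 2 := by
            congr 1
            have : (δ m)^2 * c m - δ m / 2 = (δ m / 2) * (2 * δ m * c m - 1) := by ring
            linarith [this, hcd, (by rw [hcd]; ring_nf :
              (δ m / 2) * (2 * δ m * c m - 1) = 0)]
    -- telescoping by induction
    have main : ∀ n, 1 ≤ n → n ≤ M →
        ∑ m ∈ Finset.Icc 1 n, (a m - kstar) * s m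
          ≤ c n * (B^2 - (a (n+1) - kstar)^2) + ∑ m ∈ Finset.Icc 1 n, δ m / 2 := by
      intro n hn
      induction n, hn using Nat.le_induction with
      | base =>
        intro h1M
        simp only [Finset.Icc_self, Finset.sum_singleton]
        have h1 := hstep 1 le_rfl h1M
        have h2 := hD2 1
        have h3 := hc_nonneg 1
        nlinarith [mul_nonneg h3 (by nlinarith : (0:ℝ) ≤ B^2 - (a 1 - kstar)^2)]
      | succ n hn ih =>
        intro hn1M
        have ihh := ih (by omega)
        rw [Finset.sum_Icc_succ_top (by omega : 1 ≤ n+1),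
          Finset.sum_Icc_succ_top (by omega : 1 ≤ n+1)]
        have hst := hstep (n+1) (by omega) hn1M
        have hmono := hc_mono n
        have hD := hD2 (n+1)
        have hkey : 0 ≤ (c (n+1) - c n) * (B^2 - (a (n+1) - kstar)^2) :=
          mul_nonneg (by linarith) (by nlinarith)
        nlinarith
    have hmain := main M hM le_rfl
    -- bound the two parts
    have hcM : c M * B^2 = B * Real.sqrt (2*M) / 2 := by
      simp only [hc]
      field_simp
    have hsum_δ : ∑ m ∈ Finset.Icc 1 M, δ m / 2 ≤ B * Real.sqrt (2*M) / 2 := by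
      have heq : ∑ m ∈ Finset.Icc 1 M, δ m / 2
          = (∑ m ∈ Finset.Icc 1 M, (Real.sqrt (2*(m:ℝ)))⁻¹) * (B/2) := by
        rw [Finset.sum_mul]
        exact Finset.sum_congr rfl (fun m _ => by rw [hδ m]; ring)
      rw [heq]
      calc (∑ m ∈ Finset.Icc 1 M, (Real.sqrt (2*(m:ℝ)))⁻¹) * (B/2)
          ≤ Real.sqrt (2*M) * (B/2) :=
            mul_le_mul_of_nonneg_right (sum_inv_sqrt_aux M) (by linarith)
        _ = B * Real.sqrt (2*M) / 2 := by ring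
    have hfin : c M * (B^2 - (a (M+1) - kstar)^2) ≤ c M * B^2 :=
      mul_le_mul_of_nonneg_left (by nlinarith [sq_nonneg (a (M+1) - kstar)]) (hc_nonneg M)
    calc ∑ m ∈ Finset.Icc 1 M, (a m - kstar) * s m
        ≤ c M * (B^2 - (a (M+1) - kstar)^2) + ∑ m ∈ Finset.Icc 1 M, δ m / 2 := hmain
      _ ≤ c M * B^2 + B * Real.sqrt (2*M) / 2 := by linarith
      _ = B * Real.sqrt (2*M) := by rw [hcM]; ring

theorem expected_regret_bound_noisy_sign
    {Ω : Type*} {m0 : MeasurableSpace Ω} (μ : Measure Ω) [IsProbabilityMeasure μ]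
    (ℱ : Filtration ℕ m0)
    (kmin kmax : ℝ) (hK : kmin ≤ kmax) (B : ℝ) (hB : B = kmax - kmin)
    (M : ℕ) (hM : 0 < M)
    (G : ℝ) (hG : 0 < G)
    (k shat : ℕ → Ω → ℝ) (δ : ℕ → ℝ) (hδ : ∀ m, δ m = B / Real.sqrt (2 * m))
    (τ τ' : ℕ → ℝ → ℝ)
    (kstar : ℝ) (hkstar : kstar ∈ Set.Icc kmin kmax)
    (hkmem : ∀ m ω, k m ω ∈ Set.Icc kmin kmax)
    (hadapted : Adapted ℱ k)
    (hshat_mem : ∀ m ω, shat m ω ∈ ({-1, 0, 1} : Set ℝ))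
    (hshat_int : ∀ m, Integrable (shat m) μ)
    (hupdate : ∀ m, 1 ≤ m → m ≤ M → ∀ ω,
      k (m + 1) ω = max kmin (min kmax (k m ω - δ m * shat m ω)))
    (hconv : ∀ m, ConvexOn ℝ (Set.Icc kmin kmax) (τ m))
    (hderiv : ∀ m, ∀ x ∈ Set.Icc kmin kmax, HasDerivAt (τ m) (τ' m x) x)
    (hmin : ∀ m, ∀ x ∈ Set.Icc kmin kmax, τ m kstar ≤ τ m x)
    (hbound : ∀ m, ∀ x ∈ Set.Icc kmin kmax, |τ' m x| ≤ G)
    (H : ℕ → ℝ) (Hmax : ℝ) (hH : ∀ m, 1 ≤ H m ∧ H m ≤ Hmax)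
    (hcond : ∀ m, (fun ω => H m * (μ[shat m | ℱ m]) ω)
      =ᵐ[μ] fun ω => Real.sign (τ' m (k m ω))) :
    ∫ ω, ∑ m ∈ Finset.Icc 1 M, (τ m (k m ω) - τ m kstar) ∂μ
      ≤ G * Hmax * B * Real.sqrt (2 * M) := by
  have hB0 : 0 ≤ B := by rw [hB]; linarith
  have hHmax1 : 1 ≤ Hmax := (hH 0).1.trans (hH 0).2
  have hRHS : 0 ≤ G * Hmax * B * Real.sqrt (2 * M) := by
    have := Real.sqrt_nonneg (2 * (M:ℝ))
    have h1 : 0 ≤ G * Hmax := mul_nonneg hG.le (by linarith)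
    have h2 : 0 ≤ G * Hmax * B := mul_nonneg h1 hB0
    exact mul_nonneg h2 this
  by_cases hFint : Integrable
      (fun ω => ∑ m ∈ Finset.Icc 1 M, (τ m (k m ω) - τ m kstar)) μ
  swap
  · rw [integral_undef hFint]; exact hRHS
  -- measurability and integrability facts
  have hfmeas : ∀ m, StronglyMeasurable[ℱ m] (fun ω => k m ω - kstar) :=
    fun m => ((hadapted m).sub measurable_const).stronglyMeasurable
  have hfmeas0 : ∀ m, AEStronglyMeasurable (fun ω => k m ω - kstar) μ :=
    fun m => ((hfmeas m).mono (ℱ.le m)).aestronglyMeasurable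
  have hfbdd : ∀ m ω, ‖k m ω - kstar‖ ≤ B := by
    intro m ω
    have h1 := hkmem m ω
    simp only [Set.mem_Icc] at h1
    rw [Real.norm_eq_abs, abs_le]
    constructor <;> [linarith [hkstar.2, hB0, hB ▸ le_refl B]; skip]
    · linarith [hkstar.1]
  have hfs_int : ∀ m, Integrable (fun ω => (k m ω - kstar) * shat m ω) μ :=
    fun m => (hshat_int m).bdd_mul (hfmeas0 m) (ae_of_all _ (hfbdd m))
  have hmul : ∀ m, μ[(fun ω => k m ω - kstar) * shat m | ℱ m]
      =ᵐ[μ] (fun ω => k m ω - kstar) * μ[shat m | ℱ m] :=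
    fun m => condExp_mul_of_stronglyMeasurable_left (hfmeas m) (hfs_int m) (hshat_int m)
  have hint_eq : ∀ m, ∫ ω, (k m ω - kstar) * (μ[shat m | ℱ m]) ω ∂μ
      = ∫ ω, (k m ω - kstar) * shat m ω ∂μ := by
    intro m
    have h1 : ∫ ω, (k m ω - kstar) * (μ[shat m | ℱ m]) ω ∂μ
        = ∫ ω, (μ[(fun ω => k m ω - kstar) * shat m | ℱ m]) ω ∂μ :=
      integral_congr_ae (hmul m).symm
    rw [h1, integral_condExp (ℱ.le m)]
    rfl
  have hφint : ∀ m, Integrable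
      (fun ω => (G * H m) * ((k m ω - kstar) * (μ[shat m | ℱ m]) ω)) μ :=
    fun m => (integrable_condExp.bdd_mul (hfmeas0 m) (ae_of_all _ (hfbdd m))).const_mul _
  -- a.e. pointwise bound of the regret sum
  have hae_cond : ∀ᵐ ω ∂μ, ∀ m ∈ Finset.Icc 1 M,
      H m * (μ[shat m | ℱ m]) ω = Real.sign (τ' m (k m ω)) :=
    (Finset.Icc 1 M).eventually_all.2 (fun m _ => hcond m)
  have hFΦ : ∀ᵐ ω ∂μ, ∑ m ∈ Finset.Icc 1 M, (τ m (k m ω) - τ m kstar)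
      ≤ ∑ m ∈ Finset.Icc 1 M, (G * H m) * ((k m ω - kstar) * (μ[shat m | ℱ m]) ω) := by
    filter_upwards [hae_cond] with ω hω
    apply Finset.sum_le_sum
    intro m hm
    obtain ⟨hkey, _⟩ := key_ptwise (hconv m) (hderiv m) (hmin m)
      (hbound m _ (hkmem m ω)) hkstar (hkmem m ω)
    calc τ m (k m ω) - τ m kstar
        ≤ G * (Real.sign (τ' m (k m ω)) * (k m ω - kstar)) := hkey
      _ = G * ((H m * (μ[shat m | ℱ m]) ω) * (k m ω - kstar)) := by rw [hω m hm]
      _ = (G * H m) * ((k m ω - kstar) * (μ[shat m | ℱ m]) ω) := by ring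
  have hI_nonneg : ∀ m, 0 ≤ ∫ ω, (k m ω - kstar) * shat m ω ∂μ := by
    intro m
    have h1 : 0 ≤ ∫ ω, H m * ((k m ω - kstar) * (μ[shat m | ℱ m]) ω) ∂μ := by
      apply integral_nonneg_of_ae
      filter_upwards [hcond m] with ω hω
      obtain ⟨_, hpos⟩ := key_ptwise (hconv m) (hderiv m) (hmin m)
        (hbound m _ (hkmem m ω)) hkstar (hkmem m ω)
      calc (0:ℝ) ≤ Real.sign (τ' m (k m ω)) * (k m ω - kstar) := hpos
        _ = (H m * (μ[shat m | ℱ m]) ω) * (k m ω - kstar) := by rw [hω]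
        _ = H m * ((k m ω - kstar) * (μ[shat m | ℱ m]) ω) := by ring
    rw [integral_const_mul _ _, hint_eq m] at h1
    have hHm : (0:ℝ) < H m := lt_of_lt_of_le one_pos (hH m).1
    have h2 := div_nonneg h1 hHm.le
    rwa [mul_div_cancel_left₀ _ hHm.ne'] at h2
  -- pointwise telescoping bound
  have hpt : ∀ ω, ∑ m ∈ Finset.Icc 1 M, (k m ω - kstar) * shat m ω
      ≤ B * Real.sqrt (2 * M) := by
    intro ω
    exact regret_sum_ptwise kmin kmax kstar B hK hB hkstar M hM
      (fun m => k m ω) (fun m => shat m ω) δ hδ (fun m => hkmem m ω)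
      (fun m => hshat_mem m ω) (fun m h1 h2 => hupdate m h1 h2 ω)
  have hsum_int : Integrable
      (fun ω => ∑ m ∈ Finset.Icc 1 M, (k m ω - kstar) * shat m ω) μ :=
    integrable_finset_sum _ (fun m _ => hfs_int m)
  have hsum_le : ∫ ω, ∑ m ∈ Finset.Icc 1 M, (k m ω - kstar) * shat m ω ∂μ
      ≤ B * Real.sqrt (2 * M) := by
    calc ∫ ω, ∑ m ∈ Finset.Icc 1 M, (k m ω - kstar) * shat m ω ∂μ
        ≤ ∫ _ω, B * Real.sqrt (2 * M) ∂μ :=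
          integral_mono hsum_int (integrable_const _) hpt
      _ = B * Real.sqrt (2 * M) := by simp [integral_const, measure_univ]
  -- assemble
  calc ∫ ω, ∑ m ∈ Finset.Icc 1 M, (τ m (k m ω) - τ m kstar) ∂μ
      ≤ ∫ ω, ∑ m ∈ Finset.Icc 1 M,
          (G * H m) * ((k m ω - kstar) * (μ[shat m | ℱ m]) ω) ∂μ :=
        integral_mono_ae hFint (integrable_finset_sum _ (fun m _ => hφint m)) hFΦ
    _ = ∑ m ∈ Finset.Icc 1 M,
          ∫ ω, (G * H m) * ((k m ω - kstar) * (μ[shat m | ℱ m]) ω) ∂μ :=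
        integral_finset_sum _ (fun m _ => hφint m)
    _ = ∑ m ∈ Finset.Icc 1 M,
          (G * H m) * ∫ ω, (k m ω - kstar) * shat m ω ∂μ := by
        refine Finset.sum_congr rfl (fun m _ => ?_)
        rw [integral_const_mul _ _, hint_eq m]
    _ ≤ ∑ m ∈ Finset.Icc 1 M,
          (G * Hmax) * ∫ ω, (k m ω - kstar) * shat m ω ∂μ := by
        refine Finset.sum_le_sum (fun m _ => ?_)
        exact mul_le_mul_of_nonneg_right
          (mul_le_mul_of_nonneg_left (hH m).2 hG.le) (hI_nonneg m)
    _ = (G * Hmax) * ∫ ω, ∑ m ∈ Finset.Icc 1 M, (k m ω - kstar) * shat m ω ∂μ := by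
        rw [← Finset.mul_sum, integral_finset_sum _ (fun m _ => hfs_int m)]
    _ ≤ (G * Hmax) * (B * Real.sqrt (2 * M)) :=
        mul_le_mul_of_nonneg_left hsum_le (mul_nonneg hG.le (by linarith))
    _ = G * Hmax * B * Real.sqrt (2 * M) := by ring
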